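/- Let F be a finite field with q elements, let d ≥ 1 be a natural number, and let x : Fin d → F be an injective family of d distinct interpolation nodes (so q ≥ d). For a tuple s : Fin d → F, let p_s be the Lagrange interpolation polynomial, i.e. the unique polynomial of degree less than d with p_s(x_j) = s_j for all j, and define the keyed hash h(k, s) = p_s(k) for keys k ∈ F. Then for any two distinct tuples s ≠ s' in F^d: (1) the number of keys k ∈ F with h(k, s) = h(k, s') is at most d - 1; and consequently (2) if k is drawn uniformly at random from F, the probability that h(k, s) = h(k, s') is at most (d - 1)/q. -/

import Mathlib

open Classical Polynomial

/-- Almost-universality of the polynomial-evaluation hash: for `d` distinct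
nodes `x` in a finite field `F` with `q` elements, hashing a tuple `s : Fin d → F`
by evaluating its Lagrange interpolation polynomial at the key `k`, any two
distinct tuples collide on at most `d - 1` keys, hence a uniformly random key
yields a collision with probability at most `(d - 1)/q`. -/
theorem almost_universal_hash (F : Type) [Field F] [Fintype F] [DecidableEq F]
    (q : ℕ) (hq : Fintype.card F = q)
    (d : ℕ) (hd : 1 ≤ d)
    (x : Fin d → F) (hx : Function.Injective x)
    (h : F → (Fin d → F) → F)
    (hh : ∀ (k : F) (s : Fin d → F),
      h k s = (Lagrange.interpolate Finset.univ x s).eval k)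
    (s s' : Fin d → F) (hss' : s ≠ s') :
    (Finset.univ.filter (fun k : F => h k s = h k s')).card ≤ d - 1 ∧
    ((Finset.univ.filter (fun k : F => h k s = h k s')).card : ℝ) / q
      ≤ ((d : ℝ) - 1) / q := by
  have hxinj : Set.InjOn x (Finset.univ : Finset (Fin d)) := hx.injOn
  set P := Lagrange.interpolate Finset.univ x s - Lagrange.interpolate Finset.univ x s' with hP
  have hPne : P ≠ 0 := by
    intro h0
    apply hss'
    funext i
    have := Lagrange.eval_interpolate_at_node s hxinj (Finset.mem_univ i)
    have h2 := Lagrange.eval_interpolate_at_node s' hxinj (Finset.mem_univ i)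
    have : (Lagrange.interpolate Finset.univ x s).eval (x i)
        = (Lagrange.interpolate Finset.univ x s').eval (x i) := by
      have := sub_eq_zero.mp h0
      rw [this]
    rwa [Lagrange.eval_interpolate_at_node s hxinj (Finset.mem_univ i),
      Lagrange.eval_interpolate_at_node s' hxinj (Finset.mem_univ i)] at this
  have hdeg : P.degree < d := by
    apply lt_of_le_of_lt (Polynomial.degree_sub_le _ _)
    have h1 := Lagrange.degree_interpolate_lt s hxinj
    have h2 := Lagrange.degree_interpolate_lt s' hxinj
    simp only [Finset.card_univ, Fintype.card_fin] at h1 h2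
    exact max_lt h1 h2
  have hsub : (Finset.univ.filter (fun k : F => h k s = h k s')) ⊆ P.roots.toFinset := by
    intro k hk
    simp only [Finset.mem_filter, Finset.mem_univ, true_and, hh] at hk
    simp only [Multiset.mem_toFinset, Polynomial.mem_roots hPne, Polynomial.IsRoot, hP,
      Polynomial.eval_sub, sub_eq_zero]
    exact (Polynomial.mem_roots hPne).mpr (by
      simp only [Polynomial.IsRoot.def, hP, Polynomial.eval_sub, sub_eq_zero]; exact hk)
  have hcard : (Finset.univ.filter (fun k : F => h k s = h k s')).card ≤ d - 1 := by
    calc _ ≤ P.roots.toFinset.card := Finset.card_le_card hsub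
      _ ≤ Multiset.card P.roots := P.roots.toFinset_card_le
      _ ≤ P.natDegree := P.card_roots' 
      _ ≤ d - 1 := by
          have : P.natDegree < d := (Polynomial.natDegree_lt_iff_degree_lt hPne).mpr (by
            simpa using hdeg)
          omega
  refine ⟨hcard, ?_⟩
  apply div_le_div_of_nonneg_right ?_ ?_ |>.trans_eq rfl
  · calc ((Finset.univ.filter (fun k : F => h k s = h k s')).card : ℝ)
        ≤ ((d - 1 : ℕ) : ℝ) := by exact_mod_cast hcard
      _ = (d : ℝ) - 1 := by
          have : (d : ℝ) ≥ 1 := by exact_mod_cast hd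
          push_cast [hd]
          ring
  · have : 0 < q := hq ▸ Fintype.card_pos
    positivity
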